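/- (Theorem 2, spatial-wideband far-field FIM: exact (ψ, d, B) sub-block.) Consider the spatial wideband far-field model with phase ξ_n[k] = −nΔcos θ + k·r_f·(d_n − B), where d_n = √(d² − 2·d·n·Δ·cos θ + n²Δ²) > 0, per-antenna amplitude weight w_n = d/d_n, and exact partial derivatives ∂ξ_n[k]/∂d = k·r_f·(d − nΔcos θ)/d_n and ∂ξ_n[k]/∂B = −k·r_f. Define the Fisher information sub-matrix over (ψ, d, B) entrywise by J_{pq} = γ·Σ_{n=−N/2}^{N/2} Σ_{k=−K/2}^{K/2} |s(k)|²·w_n²·u_p(n,k)·u_q(n,k) with u(n,k) = (−λ/(2π), k·r_f·(d − nΔcos θ)/d_n, −k·r_f). Then, assuming |s(−k)| = |s(k)| for all k: J_{ψψ} = γ·(λ/(2π))²·E_{K,0}·A₀⁽⁰⁾; J_{ψd} = 0; J_{ψB} = 0; J_{dd} = γ·E_{K,2}·r_f²·(A₀⁽²⁾ − 2·(Δ/d)·cos θ·A₁⁽²⁾ + (Δ²/d²)·cos²θ·A₂⁽²⁾); J_{dB} = −γ·E_{K,2}·r_f²·(A₀⁽¹⁾ − (Δ/d)·cos θ·A₁⁽¹⁾);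 J_{BB} = γ·E_{K,2}·r_f²·A₀⁽⁰⁾. In particular, the distance information contains the additional term γ·E_{K,2}·r_f²·A₂⁽²⁾·Δ²cos²θ/d², which is large near end-fire (θ ≈ 0). -/

import Mathlib

open Finset Matrix


/-- Sum of `f (-k)` over a symmetric interval equals sum of `f k`. -/
lemma sum_neg_Icc (m : ℤ) (f : ℤ → ℝ) :
    ∑ k ∈ Finset.Icc (-m) m, f (-k) = ∑ k ∈ Finset.Icc (-m) m, f k := by
  apply Finset.sum_nbij' (i := fun k => -k) (j := fun k => -k)
  all_goals intros; simp_all [Finset.mem_Icc]; try omega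

/-- Odd function sums to zero on a symmetric interval. -/
lemma sum_odd_zero (m : ℤ) (f : ℤ → ℝ) (hf : ∀ k, f (-k) = -f k) :
    ∑ k ∈ Finset.Icc (-m) m, f k = 0 := by
  have h := sum_neg_Icc m f
  simp only [hf] at h
  rw [Finset.sum_neg_distrib] at h
  linarith

lemma sum_sep (S T : Finset ℤ) (f g : ℤ → ℝ) :
    ∑ n ∈ S, ∑ k ∈ T, g n * f k = (∑ n ∈ S, g n) * (∑ k ∈ T, f k) := by
  simp only [← Finset.mul_sum]
  rw [← Finset.sum_mul]

/-- Theorem 2: Fisher information of the spatial-wideband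
far-field model, exact (ψ, d, B) sub-block, entrywise. -/
theorem wideband_farfield_FIM
    (K N : ℕ) (hK : Even K) (hN : Even N)
    (s : ℤ → ℂ) (hs : ∀ k : ℤ, ‖s (-k)‖ = ‖s k‖)
    (d θ B Δ lam rf γ : ℝ) (hd : 0 < d) (hΔ : 0 < Δ) (hlam : 0 < lam) (hγ : 0 < γ)
    (EK0 EK2 : ℝ)
    (hEK0 : EK0 = ∑ k ∈ Finset.Icc (-(K : ℤ) / 2) ((K : ℤ) / 2),
      (‖s k‖) ^ 2)
    (hEK2 : EK2 = ∑ k ∈ Finset.Icc (-(K : ℤ) / 2) ((K : ℤ) / 2),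
      (k : ℝ) ^ 2 * (‖s k‖) ^ 2)
    -- per-antenna distances d_n > 0
    (dn : ℤ → ℝ)
    (hdn : ∀ n : ℤ, dn n =
      Real.sqrt (d ^ 2 - 2 * d * (n : ℝ) * Δ * Real.cos θ + (n : ℝ) ^ 2 * Δ ^ 2))
    (hdnpos : ∀ n ∈ Finset.Icc (-(N : ℤ) / 2) ((N : ℤ) / 2), 0 < dn n)
    -- weighted array sums A_i⁽ʲ⁾
    (A : ℕ → ℕ → ℝ)
    (hA : ∀ i j : ℕ, A i j = ∑ n ∈ Finset.Icc (-(N : ℤ) / 2) ((N : ℤ) / 2),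
      (n : ℝ) ^ i * (d / dn n) ^ (j + 2))
    -- phase gradient u(n,k) over (ψ, d, B)
    (u : ℤ → ℤ → Fin 3 → ℝ)
    (hu : ∀ n k : ℤ, u n k =
      ![-(lam / (2 * Real.pi)),
        (k : ℝ) * rf * (d - (n : ℝ) * Δ * Real.cos θ) / dn n,
        -((k : ℝ) * rf)])
    -- Fisher information sub-matrix with amplitude weights w_n = d/d_n
    (J : Matrix (Fin 3) (Fin 3) ℝ)
    (hJ : ∀ p q : Fin 3, J p q = γ *
      ∑ n ∈ Finset.Icc (-(N : ℤ) / 2) ((N : ℤ) / 2),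
        ∑ k ∈ Finset.Icc (-(K : ℤ) / 2) ((K : ℤ) / 2),
          (‖s k‖) ^ 2 * (d / dn n) ^ 2 * u n k p * u n k q) :
    J 0 0 = γ * (lam / (2 * Real.pi)) ^ 2 * EK0 * A 0 0 ∧
    J 0 1 = 0 ∧
    J 0 2 = 0 ∧
    J 1 1 = γ * EK2 * rf ^ 2 *
      (A 0 2 - 2 * (Δ / d) * Real.cos θ * A 1 2
        + (Δ ^ 2 / d ^ 2) * (Real.cos θ) ^ 2 * A 2 2) ∧
    J 1 2 = -(γ * EK2 * rf ^ 2 * (A 0 1 - (Δ / d) * Real.cos θ * A 1 1)) ∧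
    J 2 2 = γ * EK2 * rf ^ 2 * A 0 0 := by
  have hKm : (-(K : ℤ) / 2) = -((K : ℤ) / 2) := by
    obtain ⟨a, ha⟩ := hK; omega
  have hodd : ∑ k ∈ Finset.Icc (-(K : ℤ) / 2) ((K : ℤ) / 2),
      (k : ℝ) * (‖s k‖) ^ 2 = 0 := by
    rw [hKm]
    exact sum_odd_zero _ _ (by intro k; push_cast; rw [hs]; ring)
  have hdne : ∀ n ∈ Finset.Icc (-(N : ℤ) / 2) ((N : ℤ) / 2), dn n ≠ 0 :=
    fun n hn => (hdnpos n hn).ne'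
  refine ⟨?_, ?_, ?_, ?_, ?_, ?_⟩
  · -- J 0 0
    rw [hJ]
    have h1 : ∀ n ∈ Finset.Icc (-(N : ℤ) / 2) ((N : ℤ) / 2),
        ∑ k ∈ Finset.Icc (-(K : ℤ) / 2) ((K : ℤ) / 2),
          (‖s k‖) ^ 2 * (d / dn n) ^ 2 * u n k 0 * u n k 0
        = ∑ k ∈ Finset.Icc (-(K : ℤ) / 2) ((K : ℤ) / 2),
          ((lam / (2 * Real.pi)) ^ 2 * (d / dn n) ^ 2) * (‖s k‖) ^ 2 := by
      intro n _
      refine Finset.sum_congr rfl fun k _ => ?_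
      rw [hu]
      simp only [Matrix.cons_val_zero]
      ring
    rw [Finset.sum_congr rfl h1, sum_sep, ← hEK0]
    have h2 : ∑ n ∈ Finset.Icc (-(N : ℤ) / 2) ((N : ℤ) / 2),
        (lam / (2 * Real.pi)) ^ 2 * (d / dn n) ^ 2
        = (lam / (2 * Real.pi)) ^ 2 * A 0 0 := by
      rw [hA, Finset.mul_sum]
      exact Finset.sum_congr rfl fun n _ => by ring
    rw [h2]; ring
  · -- J 0 1
    rw [hJ]
    have h1 : ∀ n ∈ Finset.Icc (-(N : ℤ) / 2) ((N : ℤ) / 2),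
        ∑ k ∈ Finset.Icc (-(K : ℤ) / 2) ((K : ℤ) / 2),
          (‖s k‖) ^ 2 * (d / dn n) ^ 2 * u n k 0 * u n k 1
        = ∑ k ∈ Finset.Icc (-(K : ℤ) / 2) ((K : ℤ) / 2),
          (-(lam / (2 * Real.pi)) * rf * (d / dn n) ^ 2
            * ((d - (n : ℝ) * Δ * Real.cos θ) / dn n))
            * ((k : ℝ) * (‖s k‖) ^ 2) := by
      intro n _
      refine Finset.sum_congr rfl fun k _ => ?_
      rw [hu]
      simp only [Matrix.cons_val_zero, Matrix.cons_val_one, Matrix.head_cons]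
      ring
    rw [Finset.sum_congr rfl h1, sum_sep, hodd, mul_zero, mul_zero]
  · -- J 0 2
    rw [hJ]
    have h1 : ∀ n ∈ Finset.Icc (-(N : ℤ) / 2) ((N : ℤ) / 2),
        ∑ k ∈ Finset.Icc (-(K : ℤ) / 2) ((K : ℤ) / 2),
          (‖s k‖) ^ 2 * (d / dn n) ^ 2 * u n k 0 * u n k 2
        = ∑ k ∈ Finset.Icc (-(K : ℤ) / 2) ((K : ℤ) / 2),
          ((lam / (2 * Real.pi)) * rf * (d / dn n) ^ 2)
            * ((k : ℝ) * (‖s k‖) ^ 2) := by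
      intro n _
      refine Finset.sum_congr rfl fun k _ => ?_
      rw [hu]
      simp only [Matrix.cons_val_zero, Matrix.cons_val_two, Matrix.tail_cons,
        Matrix.head_cons]
      ring
    rw [Finset.sum_congr rfl h1, sum_sep, hodd, mul_zero, mul_zero]
  · -- J 1 1
    rw [hJ]
    have h1 : ∀ n ∈ Finset.Icc (-(N : ℤ) / 2) ((N : ℤ) / 2),
        ∑ k ∈ Finset.Icc (-(K : ℤ) / 2) ((K : ℤ) / 2),
          (‖s k‖) ^ 2 * (d / dn n) ^ 2 * u n k 1 * u n k 1
        = ∑ k ∈ Finset.Icc (-(K : ℤ) / 2) ((K : ℤ) / 2),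
          (rf ^ 2 * (d / dn n) ^ 2 * ((d - (n : ℝ) * Δ * Real.cos θ) / dn n) ^ 2)
            * ((k : ℝ) ^ 2 * (‖s k‖) ^ 2) := by
      intro n _
      refine Finset.sum_congr rfl fun k _ => ?_
      rw [hu]
      simp only [Matrix.cons_val_one, Matrix.head_cons, Matrix.cons_val_zero]
      ring
    rw [Finset.sum_congr rfl h1, sum_sep, ← hEK2]
    have h2 : ∑ n ∈ Finset.Icc (-(N : ℤ) / 2) ((N : ℤ) / 2),
        rf ^ 2 * (d / dn n) ^ 2 * ((d - (n : ℝ) * Δ * Real.cos θ) / dn n) ^ 2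
        = rf ^ 2 * (A 0 2 - 2 * (Δ / d) * Real.cos θ * A 1 2
            + (Δ ^ 2 / d ^ 2) * (Real.cos θ) ^ 2 * A 2 2) := by
      rw [hA, hA, hA]
      rw [show ∀ x y z : ℝ,
        rf ^ 2 * (x - 2 * (Δ / d) * Real.cos θ * y
          + (Δ ^ 2 / d ^ 2) * (Real.cos θ) ^ 2 * z)
        = rf ^ 2 * x - (rf ^ 2 * (2 * (Δ / d) * Real.cos θ)) * y
          + (rf ^ 2 * ((Δ ^ 2 / d ^ 2) * (Real.cos θ) ^ 2)) * z from
        fun x y z => by ring]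
      rw [Finset.mul_sum, Finset.mul_sum, Finset.mul_sum,
        ← Finset.sum_sub_distrib, ← Finset.sum_add_distrib]
      refine Finset.sum_congr rfl fun n hn => ?_
      have h0 := hdne n hn
      field_simp
      have h3 : dn n ^ 4 * (dn n)⁻¹ ^ 4 = 1 := by rw [← mul_pow, mul_inv_cancel₀ h0, one_pow]
      linear_combination (-(rf ^ 2 * d ^ 4 * (n : ℝ) ^ 2 * Δ ^ 2 * Real.cos θ ^ 2) + rf ^ 2 * d ^ 5 * (n : ℝ) * Δ * Real.cos θ * 2 - rf ^ 2 * d ^ 6) * h3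
    rw [h2]; ring
  · -- J 1 2
    rw [hJ]
    have h1 : ∀ n ∈ Finset.Icc (-(N : ℤ) / 2) ((N : ℤ) / 2),
        ∑ k ∈ Finset.Icc (-(K : ℤ) / 2) ((K : ℤ) / 2),
          (‖s k‖) ^ 2 * (d / dn n) ^ 2 * u n k 1 * u n k 2
        = ∑ k ∈ Finset.Icc (-(K : ℤ) / 2) ((K : ℤ) / 2),
          (-(rf ^ 2 * (d / dn n) ^ 2 * ((d - (n : ℝ) * Δ * Real.cos θ) / dn n)))
            * ((k : ℝ) ^ 2 * (‖s k‖) ^ 2) := by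
      intro n _
      refine Finset.sum_congr rfl fun k _ => ?_
      rw [hu]
      simp only [Matrix.cons_val_one, Matrix.head_cons, Matrix.cons_val_two,
        Matrix.tail_cons, Matrix.cons_val_zero]
      ring
    rw [Finset.sum_congr rfl h1, sum_sep, ← hEK2]
    have h2 : ∑ n ∈ Finset.Icc (-(N : ℤ) / 2) ((N : ℤ) / 2),
        -(rf ^ 2 * (d / dn n) ^ 2 * ((d - (n : ℝ) * Δ * Real.cos θ) / dn n))
        = -(rf ^ 2 * (A 0 1 - (Δ / d) * Real.cos θ * A 1 1)) := by
      rw [hA, hA]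
      rw [show ∀ x y : ℝ,
        -(rf ^ 2 * (x - (Δ / d) * Real.cos θ * y))
        = (rf ^ 2 * ((Δ / d) * Real.cos θ)) * y - rf ^ 2 * x from
        fun x y => by ring]
      rw [Finset.mul_sum, Finset.mul_sum, ← Finset.sum_sub_distrib]
      refine Finset.sum_congr rfl fun n hn => ?_
      have h0 := hdne n hn
      field_simp
      have h3 : dn n ^ 3 * (dn n)⁻¹ ^ 3 = 1 := by rw [← mul_pow, mul_inv_cancel₀ h0, one_pow]
      linear_combination (-(rf ^ 2 * d ^ 3 * (n : ℝ) * Δ * Real.cos θ) + rf ^ 2 * d ^ 4) * h3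
    rw [h2]; ring
  · -- J 2 2
    rw [hJ]
    have h1 : ∀ n ∈ Finset.Icc (-(N : ℤ) / 2) ((N : ℤ) / 2),
        ∑ k ∈ Finset.Icc (-(K : ℤ) / 2) ((K : ℤ) / 2),
          (‖s k‖) ^ 2 * (d / dn n) ^ 2 * u n k 2 * u n k 2
        = ∑ k ∈ Finset.Icc (-(K : ℤ) / 2) ((K : ℤ) / 2),
          (rf ^ 2 * (d / dn n) ^ 2) * ((k : ℝ) ^ 2 * (‖s k‖) ^ 2) := by
      intro n _
      refine Finset.sum_congr rfl fun k _ => ?_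
      rw [hu]
      simp only [Matrix.cons_val_two, Matrix.tail_cons, Matrix.head_cons]
      ring
    rw [Finset.sum_congr rfl h1, sum_sep, ← hEK2]
    have h2 : ∑ n ∈ Finset.Icc (-(N : ℤ) / 2) ((N : ℤ) / 2),
        rf ^ 2 * (d / dn n) ^ 2 = rf ^ 2 * A 0 0 := by
      rw [hA, Finset.mul_sum]
      exact Finset.sum_congr rfl fun n _ => by ring
    rw [h2]; ring
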